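/- Let B be a commutative algebra over a field k of characteristic zero and let I ⊆ B ⊗_k B be the kernel of the multiplication homomorphism μ : B ⊗_k B → B (an ideal of B ⊗_k B). Then for every natural number N ≥ 1, the ideal power I^N, viewed as a k-subspace of B ⊗_k B, is equal to the k-linear span of the elements (1 ⊗ b)·(a ⊗ 1 − 1 ⊗ a)^N with a, b ∈ B. -/

import Mathlib

open TensorProduct

section PolarAux

lemma aux_step {R : Type*} [CommRing R] {ι : Type*} [DecidableEq ι] (x : ι → R)
    (a : ι) (s : Finset ι) (ha : a ∉ s) (d : ℕ) :
    ∑ S ∈ (insert a s).powerset, (-1 : R) ^ S.card * (∑ i ∈ S, x i) ^ d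
      = ∑ j ∈ Finset.range d,
          (-(x a ^ (j + 1) * (d.choose (j + 1) : R))) *
            (∑ S ∈ s.powerset, (-1 : R) ^ S.card * (∑ i ∈ S, x i) ^ (d - (j + 1))) := by
  rw [Finset.sum_powerset_insert ha]
  have h2 : ∑ S ∈ s.powerset, (-1 : R) ^ (insert a S).card * (∑ i ∈ insert a S, x i) ^ d
      = ∑ S ∈ s.powerset, (-1 : R) ^ S.card *
          (-(∑ j ∈ Finset.range (d + 1),
            x a ^ j * (∑ i ∈ S, x i) ^ (d - j) * (d.choose j : R))) := by
    refine Finset.sum_congr rfl fun S hS => ?_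
    have haS : a ∉ S := fun h => ha (Finset.mem_powerset.mp hS h)
    rw [Finset.card_insert_of_notMem haS, Finset.sum_insert haS, add_pow]
    ring
  rw [h2, ← Finset.sum_add_distrib]
  have h3 : ∀ S ∈ s.powerset,
      (-1 : R) ^ S.card * (∑ i ∈ S, x i) ^ d +
        (-1 : R) ^ S.card * (-(∑ j ∈ Finset.range (d + 1),
          x a ^ j * (∑ i ∈ S, x i) ^ (d - j) * (d.choose j : R)))
      = ∑ j ∈ Finset.range d,
          (-(x a ^ (j + 1) * (d.choose (j + 1) : R))) *
            ((-1 : R) ^ S.card * (∑ i ∈ S, x i) ^ (d - (j + 1))) := by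
    intro S hS
    rw [Finset.sum_range_succ']
    simp only [pow_zero, one_mul, Nat.choose_zero_right, Nat.cast_one, mul_one, Nat.sub_zero]
    have hterm : ∀ j ∈ Finset.range d,
        (-(x a ^ (j + 1) * (d.choose (j + 1) : R))) *
            ((-1 : R) ^ S.card * (∑ i ∈ S, x i) ^ (d - (j + 1)))
        = -((-1 : R) ^ S.card *
            (x a ^ (j + 1) * (∑ i ∈ S, x i) ^ (d - (j + 1)) * (d.choose (j + 1) : R))) :=
      fun j _ => by ring
    rw [Finset.sum_congr rfl hterm, Finset.sum_neg_distrib, ← Finset.mul_sum]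
    ring
  rw [Finset.sum_congr rfl h3, Finset.sum_comm]
  exact Finset.sum_congr rfl fun j _ => by rw [← Finset.mul_sum]

lemma aux_vanish {R : Type*} [CommRing R] {ι : Type*} [DecidableEq ι] (x : ι → R) :
    ∀ (s : Finset ι) (d : ℕ), d < s.card →
      ∑ S ∈ s.powerset, (-1 : R) ^ S.card * (∑ i ∈ S, x i) ^ d = 0 := by
  intro s
  induction s using Finset.induction_on with
  | empty => intro d hd; simp at hd
  | insert a s ha ih =>
    intro d hd
    rw [Finset.card_insert_of_notMem ha] at hd
    rw [aux_step x a s ha d]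
    refine Finset.sum_eq_zero fun j hj => ?_
    rw [ih (d - (j + 1)) ?_, mul_zero]
    have hj' := Finset.mem_range.mp hj
    omega

lemma aux_polar {R : Type*} [CommRing R] {ι : Type*} [DecidableEq ι] (x : ι → R)
    (s : Finset ι) :
    ∑ S ∈ s.powerset, (-1 : R) ^ S.card * (∑ i ∈ S, x i) ^ s.card
      = (-1 : R) ^ s.card * (s.card.factorial : R) * ∏ i ∈ s, x i := by
  induction s using Finset.induction_on with
  | empty => simp
  | insert a s ha ih =>
    rw [aux_step x a s ha, Finset.card_insert_of_notMem ha, Finset.sum_range_succ']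
    have hzero : ∀ j ∈ Finset.range s.card,
        (-(x a ^ (j + 1 + 1) * ((s.card + 1).choose (j + 1 + 1) : R))) *
          (∑ S ∈ s.powerset, (-1 : R) ^ S.card * (∑ i ∈ S, x i) ^ (s.card + 1 - (j + 1 + 1)))
        = 0 := by
      intro j hj
      rw [aux_vanish x s _ ?_, mul_zero]
      have := Finset.mem_range.mp hj
      omega
    rw [Finset.sum_congr rfl hzero, Finset.sum_const, smul_zero, zero_add]
    simp only [zero_add, Nat.add_sub_cancel, Nat.choose_one_right, pow_one]
    rw [ih, Finset.prod_insert ha, Nat.factorial_succ]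
    push_cast
    ring

end PolarAux

/-- for `B` a commutative algebra over a field `k` of characteristic zero and
`I = ker(μ : B ⊗ B → B)`, the ideal power `I^N` (`N ≥ 1`), as a `k`-subspace of `B ⊗ B`,
is the `k`-span of the elements `(1 ⊗ b)·(a ⊗ 1 − 1 ⊗ a)^N`, `a, b ∈ B`. -/
theorem stmt_8 (k : Type*) [Field k] [CharZero k]
    (B : Type*) [CommRing B] [Algebra k B]
    (I : Ideal (B ⊗[k] B))
    (hI : I = RingHom.ker (Algebra.TensorProduct.lmul' k (S := B) : B ⊗[k] B →ₐ[k] B))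
    (N : ℕ) (hN : 1 ≤ N) :
    Submodule.restrictScalars k (I ^ N) =
      Submodule.span k
        {z : B ⊗[k] B | ∃ a b : B,
          z = ((1 : B) ⊗ₜ[k] b) * (a ⊗ₜ[k] (1 : B) - (1 : B) ⊗ₜ[k] a) ^ N} := by
  classical
  set μ : B ⊗[k] B →ₐ[k] B := Algebra.TensorProduct.lmul' k (S := B) with hμ
  set d : B → B ⊗[k] B := fun c => c ⊗ₜ[k] (1 : B) - (1 : B) ⊗ₜ[k] c with hd
  have hdI : ∀ c : B, d c ∈ I := by
    intro c
    rw [hI, RingHom.mem_ker]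
    show μ (c ⊗ₜ[k] (1 : B) - (1 : B) ⊗ₜ[k] c) = 0
    rw [map_sub, Algebra.TensorProduct.lmul'_apply_tmul, Algebra.TensorProduct.lmul'_apply_tmul]
    ring
  set T := Submodule.span k
        {z : B ⊗[k] B | ∃ a b : B,
          z = ((1 : B) ⊗ₜ[k] b) * (a ⊗ₜ[k] (1 : B) - (1 : B) ⊗ₜ[k] a) ^ N} with hT
  set G : ℕ → Set (B ⊗[k] B) :=
    fun m => {z | ∃ (b : B) (a : Fin m → B), z = ((1 : B) ⊗ₜ[k] b) * ∏ i, d (a i)} with hG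
  -- base case: I ≤ span (G 1)
  have base : ∀ x ∈ I, x ∈ Submodule.span k (G 1) := by
    have key : ∀ x : B ⊗[k] B, x - (1 : B) ⊗ₜ[k] (μ x) ∈ Submodule.span k (G 1) := by
      intro x
      induction x using TensorProduct.induction_on with
      | zero => simp
      | tmul a b =>
        have heq : a ⊗ₜ[k] b - (1 : B) ⊗ₜ[k] (μ (a ⊗ₜ[k] b))
            = ((1 : B) ⊗ₜ[k] b) * ∏ i : Fin 1, d ((fun _ : Fin 1 => a) i) := by
          rw [Fin.prod_univ_one]
          show a ⊗ₜ[k] b - (1 : B) ⊗ₜ[k] (μ (a ⊗ₜ[k] b))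
              = ((1 : B) ⊗ₜ[k] b) * (a ⊗ₜ[k] (1 : B) - (1 : B) ⊗ₜ[k] a)
          rw [hμ, Algebra.TensorProduct.lmul'_apply_tmul, mul_sub,
            Algebra.TensorProduct.tmul_mul_tmul, Algebra.TensorProduct.tmul_mul_tmul]
          rw [one_mul, mul_one, one_mul, mul_comm a b]
        rw [heq]
        exact Submodule.subset_span ⟨b, fun _ => a, rfl⟩
      | add x y hx hy =>
        have : x + y - (1 : B) ⊗ₜ[k] (μ (x + y))
            = (x - (1 : B) ⊗ₜ[k] (μ x)) + (y - (1 : B) ⊗ₜ[k] (μ y)) := by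
          rw [map_add, tmul_add]; ring
        rw [this]
        exact add_mem hx hy
    intro x hx
    have hx0 : μ x = 0 := by rw [hI] at hx; exact RingHom.mem_ker.mp hx
    have := key x
    rwa [hx0, tmul_zero, sub_zero] at this
  -- multiplication step
  have hmulG : ∀ m : ℕ, ∀ y ∈ Submodule.span k (G m), ∀ z ∈ Submodule.span k (G 1),
      y * z ∈ Submodule.span k (G (m + 1)) := by
    intro m y hy z hz
    have hle : Submodule.span k (G m) * Submodule.span k (G 1)
        ≤ Submodule.span k (G (m + 1)) := by
      rw [Submodule.span_mul_span]
      apply Submodule.span_mono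
      rintro w hw
      rw [Set.mem_mul] at hw
      obtain ⟨u, hu, v, hv, rfl⟩ := hw
      obtain ⟨b, a, rfl⟩ := hu
      obtain ⟨b', a', rfl⟩ := hv
      refine ⟨b * b', Fin.snoc a (a' 0), ?_⟩
      rw [Fin.prod_univ_one]
      conv_rhs => rw [Fin.prod_univ_castSucc]
      simp only [Fin.snoc_castSucc, Fin.snoc_last]
      have h1 : ((1 : B) ⊗ₜ[k] (b * b') : B ⊗[k] B) = ((1 : B) ⊗ₜ[k] b) * ((1 : B) ⊗ₜ[k] b') := by
        rw [Algebra.TensorProduct.tmul_mul_tmul, one_mul]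
      rw [h1]; ring
    exact hle (Submodule.mul_mem_mul hy hz)
  -- powers
  have hpow : ∀ m : ℕ, ∀ x ∈ I ^ (m + 1), x ∈ Submodule.span k (G (m + 1)) := by
    intro m
    induction m with
    | zero => intro x hx; rw [pow_one] at hx; exact base x hx
    | succ m ih =>
      intro x hx
      rw [pow_succ] at hx
      refine Submodule.mul_induction_on hx ?_ ?_
      · intro y hy z hz
        exact hmulG (m + 1) y (ih y hy) z (base z hz)
      · intro u v hu hv
        exact add_mem hu hv
  -- polarization step : span (G N) ≤ T
  have hGT : Submodule.span k (G N) ≤ T := by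
    rw [Submodule.span_le]
    rintro w ⟨b, a, rfl⟩
    have hp := aux_polar (fun i => d (a i)) (Finset.univ : Finset (Fin N))
    rw [Finset.card_univ, Fintype.card_fin] at hp
    have hsum : ∀ S : Finset (Fin N), ∑ i ∈ S, d (a i) = d (∑ i ∈ S, a i) := by
      intro S
      show ∑ i ∈ S, (a i ⊗ₜ[k] (1 : B) - (1 : B) ⊗ₜ[k] a i)
          = (∑ i ∈ S, a i) ⊗ₜ[k] (1 : B) - (1 : B) ⊗ₜ[k] (∑ i ∈ S, a i)
      rw [Finset.sum_sub_distrib, ← TensorProduct.sum_tmul, ← TensorProduct.tmul_sum]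
    have hmem : ((-1 : k) ^ N * (N.factorial : k)) •
        (((1 : B) ⊗ₜ[k] b) * ∏ i, d (a i)) ∈ T := by
      have hsmul : ((-1 : k) ^ N * (N.factorial : k)) •
          (((1 : B) ⊗ₜ[k] b) * ∏ i, d (a i))
          = ((1 : B) ⊗ₜ[k] b) *
            ((-1 : B ⊗[k] B) ^ N * (N.factorial : B ⊗[k] B) * ∏ i, d (a i)) := by
        rw [Algebra.smul_def, map_mul, map_pow, map_neg, map_one, map_natCast]
        ring
      rw [hsmul, ← hp, Finset.mul_sum]
      refine Submodule.sum_mem _ fun S hS => ?_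
      rw [hsum S]
      have hterm : ((1 : B) ⊗ₜ[k] b) * ((-1 : B ⊗[k] B) ^ S.card * (d (∑ i ∈ S, a i)) ^ N)
          = ((-1 : k) ^ S.card) • (((1 : B) ⊗ₜ[k] b) * (d (∑ i ∈ S, a i)) ^ N) := by
        rw [Algebra.smul_def, map_pow, map_neg, map_one]
        ring
      rw [hterm]
      exact Submodule.smul_mem _ _ (Submodule.subset_span ⟨∑ i ∈ S, a i, b, rfl⟩)
    have hc : ((-1 : k) ^ N * (N.factorial : k)) ≠ 0 := by
      apply mul_ne_zero
      · exact pow_ne_zero _ (by norm_num)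
      · exact_mod_cast Nat.factorial_ne_zero N
    have := Submodule.smul_mem T ((-1 : k) ^ N * (N.factorial : k))⁻¹ hmem
    rwa [smul_smul, inv_mul_cancel₀ hc, one_smul] at this
  apply le_antisymm
  · intro x hx
    rw [Submodule.restrictScalars_mem] at hx
    obtain ⟨m, rfl⟩ : ∃ m, N = m + 1 := ⟨N - 1, by omega⟩
    exact hGT (hpow m x hx)
  · rw [Submodule.span_le]
    rintro z ⟨a, b, rfl⟩
    rw [SetLike.mem_coe, Submodule.restrictScalars_mem]
    exact Ideal.mul_mem_left _ _ (Ideal.pow_mem_pow (hdI a) N)
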